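/- For an LTI operator G acting on the sinusoidal input space 𝒰_ω = {a sin(ωt + φ)}, the SRG restricted to 𝒰_ω is exactly the two-point set {G(jω), G(−jω)} = {G(jω), conj(G(jω))}. -/

import Mathlib

/-- Phasor inner product on `ℂ` viewed as a real Hilbert space: `⟨u,v⟩ = Re(ū·v)`. -/
noncomputable def phasorInner (u v : ℂ) : ℝ := ((starRingEnd ℂ) u * v).re

/-- The angle `∠(u,y) = arccos(Re⟨u,y⟩/(‖u‖‖y‖))` in the phasor model. -/
noncomputable def phasorAngle (u y : ℂ) : ℝ :=
  Real.arccos (phasorInner u y / (‖u‖ * ‖y‖))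

/-- The SRG of an operator on the phasor space `ℂ` (which models the sinusoidal input
space `𝒰_ω`, an LTI system `G` acting as multiplication by `G(jω)`). -/
noncomputable def SRGphasor (R : ℂ → ℂ) : Set ℂ :=
  {z | ∃ u₁ u₂ : ℂ, u₁ ≠ u₂ ∧
    (z = (‖R u₁ - R u₂‖ / ‖u₁ - u₂‖ : ℝ) *
          Complex.exp ((phasorAngle (u₁ - u₂) (R u₁ - R u₂) : ℂ) * Complex.I) ∨
     z = (‖R u₁ - R u₂‖ / ‖u₁ - u₂‖ : ℝ) *
          Complex.exp (-(phasorAngle (u₁ - u₂) (R u₁ - R u₂) : ℂ) * Complex.I))}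

/-- `|g| e^{-i arg g} = conj g`. -/
lemma conj_rep (g : ℂ) :
    ((‖g‖ : ℝ) : ℂ) * Complex.exp (-(g.arg : ℂ) * Complex.I) = (starRingEnd ℂ) g := by
  conv_rhs => rw [← Complex.norm_mul_exp_arg_mul_I g]
  rw [map_mul, Complex.conj_ofReal, ← Complex.exp_conj]
  congr 1
  simp [Complex.conj_I]

/-- The phasor angle between `d` and `g·d` is `|arg g|`. -/
lemma ang (g d : ℂ) (hg : g ≠ 0) (hd : d ≠ 0) : phasorAngle d (g * d) = |g.arg| := by
  unfold phasorAngle phasorInner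
  have habs : ‖d‖ ≠ 0 := norm_ne_zero_iff.mpr hd
  have hga : ‖g‖ ≠ 0 := norm_ne_zero_iff.mpr hg
  have key : ((starRingEnd ℂ) d * (g * d)).re / (‖d‖ * ‖g * d‖)
      = g.re / ‖g‖ := by
    have h1 : ((starRingEnd ℂ) d * (g * d)) = g * ((starRingEnd ℂ) d * d) := by ring
    have h2 : ((starRingEnd ℂ) d * d) = ((Complex.normSq d : ℝ) : ℂ) := by
      rw [mul_comm]; exact Complex.mul_conj d
    rw [h1, h2, norm_mul]
    simp only [Complex.mul_re, Complex.ofReal_re, Complex.ofReal_im, mul_zero, sub_zero]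
    rw [Complex.normSq_eq_norm_sq]
    field_simp
  rw [key, ← Complex.cos_arg hg, ← Real.cos_abs,
    Real.arccos_cos (abs_nonneg _) (Complex.abs_arg_le_pi g)]

/-- The two candidate SRG points are exactly `g` and `conj g` (in some order). -/
lemma vals (g : ℂ) {u₁ u₂ : ℂ} (h : u₁ ≠ u₂) :
    (((‖g * u₁ - g * u₂‖ / ‖u₁ - u₂‖ : ℝ) : ℂ) *
        Complex.exp ((phasorAngle (u₁ - u₂) (g * u₁ - g * u₂) : ℂ) * Complex.I) = g ∧
      ((‖g * u₁ - g * u₂‖ / ‖u₁ - u₂‖ : ℝ) : ℂ) *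
        Complex.exp (-(phasorAngle (u₁ - u₂) (g * u₁ - g * u₂) : ℂ) * Complex.I)
        = (starRingEnd ℂ) g) ∨
    (((‖g * u₁ - g * u₂‖ / ‖u₁ - u₂‖ : ℝ) : ℂ) *
        Complex.exp ((phasorAngle (u₁ - u₂) (g * u₁ - g * u₂) : ℂ) * Complex.I)
        = (starRingEnd ℂ) g ∧
      ((‖g * u₁ - g * u₂‖ / ‖u₁ - u₂‖ : ℝ) : ℂ) *
        Complex.exp (-(phasorAngle (u₁ - u₂) (g * u₁ - g * u₂) : ℂ) * Complex.I) = g) := by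
  have hd : u₁ - u₂ ≠ 0 := sub_ne_zero.mpr h
  rcases eq_or_ne g 0 with rfl | hg
  · left; simp
  · have hdiff : g * u₁ - g * u₂ = g * (u₁ - u₂) := by ring
    have hmag : (‖g * u₁ - g * u₂‖ / ‖u₁ - u₂‖ : ℝ) = ‖g‖ := by
      rw [hdiff, norm_mul, mul_div_assoc, div_self (norm_ne_zero_iff.mpr hd), mul_one]
    have hang : phasorAngle (u₁ - u₂) (g * u₁ - g * u₂) = |g.arg| := by
      rw [hdiff]; exact ang g (u₁ - u₂) hg hd
    rw [hmag, hang]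
    rcases le_or_gt 0 g.arg with hle | hlt
    · left
      constructor
      · rw [abs_of_nonneg hle]; exact Complex.norm_mul_exp_arg_mul_I g
      · rw [abs_of_nonneg hle]; exact conj_rep g
    · right
      constructor
      · rw [abs_of_neg hlt, Complex.ofReal_neg]
        exact conj_rep g
      · rw [abs_of_neg hlt, Complex.ofReal_neg, neg_neg ((g.arg : ℂ))]
        exact Complex.norm_mul_exp_arg_mul_I g

/-- **SRG of an LTI operator on the sinusoidal input space** `𝒰_ω`: identifying
sinusoids of frequency `ω` with phasors, on which `G` acts as multiplication by
`g = G(jω)`, the SRG is exactly the two-point set `{G(jω), conj(G(jω))}`. -/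
theorem SRG_lti_sinusoidal (g : ℂ) :
    SRGphasor (fun u => g * u) = {g, (starRingEnd ℂ) g} := by
  ext z
  simp only [SRGphasor, Set.mem_setOf_eq, Set.mem_insert_iff, Set.mem_singleton_iff]
  constructor
  · rintro ⟨u₁, u₂, h, hz | hz⟩
    · rcases vals g h with ⟨hp, _⟩ | ⟨hp, _⟩
      · exact Or.inl (hz.trans hp)
      · exact Or.inr (hz.trans hp)
    · rcases vals g h with ⟨_, hm⟩ | ⟨_, hm⟩
      · exact Or.inr (hz.trans hm)
      · exact Or.inl (hz.trans hm)
  · rintro (hz | hz) <;> refine ⟨1, 0, one_ne_zero, ?_⟩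
    · rcases vals g (one_ne_zero (α := ℂ)) with ⟨hp, _⟩ | ⟨_, hm⟩
      · exact Or.inl (hz.trans hp.symm)
      · exact Or.inr (hz.trans hm.symm)
    · rcases vals g (one_ne_zero (α := ℂ)) with ⟨_, hm⟩ | ⟨hp, _⟩
      · exact Or.inr (hz.trans hm.symm)
      · exact Or.inl (hz.trans hp.symm)
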